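/- Let a, b ≥ 0 with a + b ≥ 1, and let w be any binary word of length a + b + 2 containing exactly a + 2 ones. Then 4·(value of 111 0^b 1^a) < 7·(value of 1 w), where both words have length a + b + 3. -/

import Mathlib

/-- Base-2 value of a binary word (most significant bit first). -/
def val (w : List Bool) : ℕ :=
  w.foldl (fun n b => 2 * n + b.toNat) 0

lemma foldl_val (w : List Bool) (n : ℕ) :
    w.foldl (fun n b => 2 * n + b.toNat) n = n * 2 ^ w.length + val w := by
  induction w generalizing n with
  | nil => simp [val]
  | cons b t ih =>
    simp only [List.foldl_cons, List.length_cons, val]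
    rw [ih, ih (2 * 0 + b.toNat)]
    ring

lemma val_cons (b : Bool) (w : List Bool) :
    val (b :: w) = b.toNat * 2 ^ w.length + val w := by
  simpa [val, List.foldl_cons] using foldl_val w b.toNat

lemma val_append (x y : List Bool) :
    val (x ++ y) = val x * 2 ^ y.length + val y := by
  simpa [val, List.foldl_append] using foldl_val y (val x)

lemma val_replicate_false (n : ℕ) : val (List.replicate n false) = 0 := by
  induction n with
  | zero => rfl
  | succ k ih => rw [List.replicate_succ, val_cons, ih]; simp

lemma val_replicate_true (n : ℕ) : val (List.replicate n true) = 2 ^ n - 1 := by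
  induction n with
  | zero => rfl
  | succ k ih =>
    rw [List.replicate_succ, val_cons, ih]
    simp only [Bool.toNat_true, List.length_replicate, one_mul]
    have : 1 ≤ 2 ^ k := Nat.one_le_two_pow
    omega

lemma val_ge_of_count (w : List Bool) : 2 ^ (w.count true) - 1 ≤ val w := by
  induction w with
  | nil => simp
  | cons b t ih =>
    rw [val_cons]
    cases b with
    | false =>
      simpa [List.count_cons] using ih
    | true =>
      rw [List.count_cons_self]
      simp only [Bool.toNat_true, one_mul]
      have h1 : t.count true ≤ t.length := List.count_le_length
      have h2 : 2 ^ (t.count true) ≤ 2 ^ t.length := Nat.pow_le_pow_right (by norm_num) h1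
      have h3 : 1 ≤ 2 ^ (t.count true) := Nat.one_le_two_pow
      have : 2 ^ (t.count true + 1) = 2 * 2 ^ (t.count true) := by ring
      omega

theorem stmt8 (a b : ℕ) (hab : 1 ≤ a + b)
    (w : List Bool) (hl : w.length = a + b + 2) (hc : w.count true = a + 2) :
    4 * val ([true, true, true] ++ List.replicate b false ++ List.replicate a true) <
      7 * val ([true] ++ w) := by
  have hw : 2 ^ (a + 2) - 1 ≤ val w := by
    have := val_ge_of_count w
    rwa [hc] at this
  rw [val_append, val_append, val_append, val_replicate_false, val_replicate_true]
  simp only [List.length_replicate, hl]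
  have hval3 : val [true, true, true] = 7 := rfl
  have hval1 : val [true] = 1 := rfl
  rw [hval3, hval1]
  have e1 : 2 ^ (a + b + 2) = 4 * (2 ^ a * 2 ^ b) := by ring
  have e2 : (2:ℕ) ^ (a + 2) = 4 * 2 ^ a := by ring
  rw [e1]
  rw [e2] at hw
  have hyx : (7 * 2 ^ b + 0) * 2 ^ a = 7 * (2 ^ a * 2 ^ b) := by ring
  rw [hyx]
  have h1 : 1 ≤ 2 ^ a := Nat.one_le_two_pow
  generalize (2:ℕ) ^ a * 2 ^ b = p
  omega
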